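/- (Averaging lemma) Let μ be a distribution on {-1,1}² with uniform marginals, and let (X_i,Y_i), i = 1..n, be i.i.d. from μ. Let f₁,f₂ : {-1,1}^n → [0,1] and let S ⊆ [n] be a set of coordinates such that for each i ∈ S at most one of f₁,f₂ has I_i(f_j) > ε. Define g_j(x) = E[f_j(Z) | Z restricted to [n]∖S equals x restricted to [n]∖S] (averaging over uniform coordinates in S). Then the g_j do not depend on coordinates in S, take values in [0,1], satisfy E[g_j] = E[f_j], and |E[f₁(X)f₂(Y)] - E[g₁(X)g₂(Y)]| ≤ |S|·√ε. -/

import Mathlib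

/-- Influence of coordinate `i` on a real-valued function of the cube (uniform
measure): `I_i(f) = E[(f - E_i f)²]` where `E_i` averages over coordinate `i`. -/
noncomputable def influenceR (n : ℕ) (f : (Fin n → Bool) → ℝ) (i : Fin n) : ℝ :=
  (∑ x : Fin n → Bool,
    (f x - (f (Function.update x i true) + f (Function.update x i false)) / 2)^2) / 2^n

/-- The function obtained from `f` by averaging out (uniformly) the coordinates in
`S`. -/
noncomputable def avgOut (n : ℕ) (S : Finset (Fin n)) (f : (Fin n → Bool) → ℝ)
    (x : Fin n → Bool) : ℝ :=
  (∑ y ∈ Finset.univ.filter (fun y : Fin n → Bool => ∀ i ∉ S, y i = x i), f y) / 2 ^ S.card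

open Finset Function

variable {n : ℕ}

noncomputable def Ai (i : Fin n) (f : (Fin n → Bool) → ℝ) (x : Fin n → Bool) : ℝ :=
  (f (update x i true) + f (update x i false)) / 2

lemma sum_split (i : Fin n) (F : (Fin n → Bool) → ℝ) :
    ∑ y : Fin n → Bool, F y
      = ∑ y : Fin n → Bool, (F (update y i true) + F (update y i false)) / 2 := by
  have h1 : ∑ y : Fin n → Bool, F (update y i (!(y i))) = ∑ y : Fin n → Bool, F y := by
    apply Finset.sum_nbij' (fun y => update y i (!(y i))) (fun y => update y i (!(y i)))
    · intros; exact mem_univ _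
    · intros; exact mem_univ _
    · intro y _; simp [Function.update_idem]
    · intro y _; simp [Function.update_idem]
    · intro y _; rfl
  have key : ∀ y : Fin n → Bool,
      F (update y i true) + F (update y i false) = F y + F (update y i (!(y i))) := by
    intro y
    cases hb : y i
    · have h : update y i false = y := by rw [← hb]; exact update_eq_self i y
      rw [h, Bool.not_false, add_comm]
    · have h : update y i true = y := by rw [← hb]; exact update_eq_self i y
      rw [h, Bool.not_true]
  have h2 : ∑ y : Fin n → Bool, (F (update y i true) + F (update y i false)) / 2
      = (∑ y : Fin n → Bool, F y + ∑ y : Fin n → Bool, F (update y i (!(y i)))) / 2 := by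
    rw [← Finset.sum_add_distrib, ← Finset.sum_div]
    congr 1
    exact Finset.sum_congr rfl fun y _ => key y
  rw [h2, h1]; ring

lemma card_agree (S : Finset (Fin n)) (x : Fin n → Bool) :
    (Finset.univ.filter (fun y : Fin n → Bool => ∀ i ∉ S, y i = x i)).card = 2 ^ S.card := by
  have h2 : (2 : ℕ) ^ S.card = Fintype.card (↥S → Bool) := by
    simp [Fintype.card_fun]
  rw [h2, ← Finset.card_univ]
  apply Finset.card_nbij' (fun y => fun j : ↥S => y j)
    (fun z => fun j => if h : j ∈ S then z ⟨j, h⟩ else x j)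
  · intros; simp
  · intro z _
    simp only [coe_filter, mem_filter, mem_univ, true_and, Set.mem_setOf_eq]
    intro j hj
    simp [hj]
  · intro y hy
    simp only [coe_filter, mem_filter, mem_univ, true_and, Set.mem_setOf_eq] at hy
    funext j
    by_cases h : j ∈ S
    · simp [h]
    · simp [h, hy j h]
  · intro z _
    funext j
    simp [j.2]

lemma double_count (S : Finset (Fin n)) (F : (Fin n → Bool) → ℝ) :
    ∑ x : Fin n → Bool,
      ∑ y ∈ Finset.univ.filter (fun y : Fin n → Bool => ∀ i ∉ S, y i = x i), F y
    = 2 ^ S.card * ∑ y : Fin n → Bool, F y := by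
  simp_rw [Finset.sum_filter]
  rw [Finset.sum_comm]
  have : ∀ y : Fin n → Bool,
      (∑ x : Fin n → Bool, if (∀ i ∉ S, y i = x i) then F y else 0) = 2 ^ S.card * F y := by
    intro y
    rw [← Finset.sum_filter, Finset.sum_const, nsmul_eq_mul]
    have hc : (Finset.univ.filter (fun x : Fin n → Bool => ∀ i ∉ S, y i = x i)).card
        = 2 ^ S.card := by
      rw [← card_agree S y]
      congr 1
      apply Finset.filter_congr
      intro x _
      simp [eq_comm]
    rw [hc]
    push_cast
    ring
  rw [Finset.sum_congr rfl (fun y _ => this y), Finset.mul_sum]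

lemma avgOut_congr (S : Finset (Fin n)) (f : (Fin n → Bool) → ℝ) (x x' : Fin n → Bool)
    (h : ∀ i ∉ S, x i = x' i) : avgOut n S f x = avgOut n S f x' := by
  unfold avgOut
  congr 2
  apply Finset.filter_congr
  intro y _
  constructor
  · intro hy i hi; rw [hy i hi, h i hi]
  · intro hy i hi; rw [hy i hi, h i hi]

lemma avgOut_empty (f : (Fin n → Bool) → ℝ) : avgOut n ∅ f = f := by
  funext x
  unfold avgOut
  have : Finset.univ.filter (fun y : Fin n → Bool => ∀ i ∉ (∅ : Finset (Fin n)), y i = x i)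
      = {x} := by
    ext y
    simp [funext_iff]
  rw [this]
  simp

lemma avgOut_mem_Icc (S : Finset (Fin n)) (f : (Fin n → Bool) → ℝ)
    (hf : ∀ x, f x ∈ Set.Icc (0:ℝ) 1) (x : Fin n → Bool) :
    avgOut n S f x ∈ Set.Icc (0:ℝ) 1 := by
  unfold avgOut
  constructor
  · apply div_nonneg
    · exact Finset.sum_nonneg fun y _ => (hf y).1
    · positivity
  · rw [div_le_one (by positivity)]
    calc (∑ y ∈ Finset.univ.filter (fun y : Fin n → Bool => ∀ i ∉ S, y i = x i), f y)
        ≤ ∑ y ∈ Finset.univ.filter (fun y : Fin n → Bool => ∀ i ∉ S, y i = x i), 1 :=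
          Finset.sum_le_sum fun y _ => (hf y).2
      _ = 2 ^ S.card := by rw [Finset.sum_const, card_agree]; simp
      _ ≤ (2:ℝ) ^ S.card := le_refl _

lemma avgOut_sum (S : Finset (Fin n)) (f : (Fin n → Bool) → ℝ) :
    ∑ x : Fin n → Bool, avgOut n S f x = ∑ x : Fin n → Bool, f x := by
  unfold avgOut
  rw [← Finset.sum_div, double_count]
  rw [mul_comm, mul_div_assoc, div_self (by positivity : ((2:ℝ) ^ S.card) ≠ 0), mul_one]

lemma filter_insert_split (S : Finset (Fin n)) (i : Fin n) (hi : i ∉ S) (x : Fin n → Bool)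
    (b : Bool) :
    Finset.univ.filter (fun y : Fin n → Bool => ∀ j ∉ S, y j = update x i b j)
    = (Finset.univ.filter (fun y : Fin n → Bool => ∀ j ∉ insert i S, y j = x j)).filter
        (fun y => y i = b) := by
  ext y
  simp only [mem_filter, mem_univ, true_and, mem_insert]
  constructor
  · intro h
    refine ⟨fun j hj => ?_, ?_⟩
    · push_neg at hj
      rw [h j hj.2, update_of_ne hj.1]
    · rw [h i hi, update_self]
  · rintro ⟨h1, h2⟩ j hj
    by_cases hji : j = i
    · subst hji; rw [h2, update_self]
    · rw [update_of_ne hji, h1 j (by simp [hji, hj])]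

lemma avgOut_insert (S : Finset (Fin n)) (i : Fin n) (hi : i ∉ S)
    (f : (Fin n → Bool) → ℝ) (x : Fin n → Bool) :
    avgOut n (insert i S) f x
      = (avgOut n S f (update x i true) + avgOut n S f (update x i false)) / 2 := by
  unfold avgOut
  rw [filter_insert_split S i hi x true, filter_insert_split S i hi x false]
  rw [Finset.card_insert_of_notMem hi]
  have := Finset.sum_filter_add_sum_filter_not
    (Finset.univ.filter (fun y : Fin n → Bool => ∀ j ∉ insert i S, y j = x j))
    (fun y => y i = true) f
  have hnot : (Finset.univ.filter (fun y : Fin n → Bool => ∀ j ∉ insert i S, y j = x j)).filter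
      (fun y => ¬ y i = true)
      = (Finset.univ.filter (fun y : Fin n → Bool => ∀ j ∉ insert i S, y j = x j)).filter
        (fun y => y i = false) := by
    apply Finset.filter_congr; intro y _; simp
  rw [hnot] at this
  rw [← this]
  rw [pow_succ]
  ring

lemma sum_agree_update (S : Finset (Fin n)) (i : Fin n) (hi : i ∉ S) (x : Fin n → Bool)
    (b : Bool) (f : (Fin n → Bool) → ℝ) :
    ∑ y ∈ Finset.univ.filter (fun y : Fin n → Bool => ∀ j ∉ S, y j = update x i b j), f y
    = ∑ y ∈ Finset.univ.filter (fun y : Fin n → Bool => ∀ j ∉ S, y j = x j),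
        f (update y i b) := by
  apply Finset.sum_nbij' (fun z => update z i (x i)) (fun y => update y i b)
  · intro z hz
    simp only [mem_filter, mem_univ, true_and] at hz ⊢
    intro j hj
    by_cases hji : j = i
    · subst hji; rw [update_self]
    · rw [update_of_ne hji, hz j hj, update_of_ne hji]
  · intro y hy
    simp only [mem_filter, mem_univ, true_and] at hy ⊢
    intro j hj
    by_cases hji : j = i
    · subst hji; rw [update_self, update_self]
    · rw [update_of_ne hji, hy j hj, update_of_ne hji]
  · intro z hz
    simp only [mem_filter, mem_univ, true_and] at hz
    have hzi : z i = b := by rw [hz i hi, update_self]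
    rw [update_idem, ← hzi, update_eq_self]
  · intro y hy
    simp only [mem_filter, mem_univ, true_and] at hy
    have hyi : y i = x i := hy i hi
    rw [update_idem, ← hyi, update_eq_self]
  · intro z hz
    simp only [mem_filter, mem_univ, true_and] at hz
    have hzi : z i = b := by rw [hz i hi, update_self]
    rw [update_idem, ← hzi, update_eq_self]

lemma avgOut_d (S : Finset (Fin n)) (i : Fin n) (hi : i ∉ S) (f : (Fin n → Bool) → ℝ)
    (x : Fin n → Bool) :
    avgOut n S f x
      - (avgOut n S f (update x i true) + avgOut n S f (update x i false)) / 2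
    = avgOut n S
        (fun z => f z - (f (update z i true) + f (update z i false)) / 2) x := by
  unfold avgOut
  rw [sum_agree_update S i hi x true f, sum_agree_update S i hi x false f]
  rw [Finset.sum_sub_distrib]
  rw [show (∑ z ∈ Finset.univ.filter (fun y : Fin n → Bool => ∀ i ∉ S, y i = x i),
      (f (update z i true) + f (update z i false)) / 2)
    = (∑ z ∈ Finset.univ.filter (fun y : Fin n → Bool => ∀ i ∉ S, y i = x i),
        f (update z i true)
      + ∑ z ∈ Finset.univ.filter (fun y : Fin n → Bool => ∀ i ∉ S, y i = x i),
        f (update z i false)) / 2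
    from by rw [← Finset.sum_add_distrib, ← Finset.sum_div]]
  ring

lemma sq_avgOut_le (S : Finset (Fin n)) (d : (Fin n → Bool) → ℝ) :
    ∑ x : Fin n → Bool, (avgOut n S d x) ^ 2 ≤ ∑ x : Fin n → Bool, (d x) ^ 2 := by
  have key : ∀ x : Fin n → Bool, (avgOut n S d x) ^ 2
      ≤ (∑ y ∈ Finset.univ.filter (fun y : Fin n → Bool => ∀ i ∉ S, y i = x i), (d y) ^ 2)
          / 2 ^ S.card := by
    intro x
    unfold avgOut
    rw [div_pow, div_le_div_iff₀ (by positivity) (by positivity)]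
    calc (∑ y ∈ Finset.univ.filter (fun y : Fin n → Bool => ∀ i ∉ S, y i = x i), d y) ^ 2
          * 2 ^ S.card
        ≤ ((Finset.univ.filter (fun y : Fin n → Bool => ∀ i ∉ S, y i = x i)).card
            * ∑ y ∈ Finset.univ.filter (fun y : Fin n → Bool => ∀ i ∉ S, y i = x i),
                (d y) ^ 2) * 2 ^ S.card := by
          apply mul_le_mul_of_nonneg_right (sq_sum_le_card_mul_sum_sq) (by positivity)
      _ = (∑ y ∈ Finset.univ.filter (fun y : Fin n → Bool => ∀ i ∉ S, y i = x i), (d y) ^ 2)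
            * ((2:ℝ) ^ S.card) ^ 2 := by
          rw [card_agree]
          push_cast
          ring
  calc ∑ x : Fin n → Bool, (avgOut n S d x) ^ 2
      ≤ ∑ x : Fin n → Bool,
          (∑ y ∈ Finset.univ.filter (fun y : Fin n → Bool => ∀ i ∉ S, y i = x i), (d y) ^ 2)
            / 2 ^ S.card := Finset.sum_le_sum fun x _ => key x
    _ = (∑ x : Fin n → Bool,
          ∑ y ∈ Finset.univ.filter (fun y : Fin n → Bool => ∀ i ∉ S, y i = x i), (d y) ^ 2)
            / 2 ^ S.card := by rw [Finset.sum_div]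
    _ = ∑ x : Fin n → Bool, (d x) ^ 2 := by
        rw [double_count]
        rw [mul_comm, mul_div_assoc, div_self (by positivity : ((2:ℝ) ^ S.card) ≠ 0), mul_one]

lemma influence_avgOut_le (S : Finset (Fin n)) (i : Fin n) (hi : i ∉ S)
    (f : (Fin n → Bool) → ℝ) :
    influenceR n (avgOut n S f) i ≤ influenceR n f i := by
  unfold influenceR
  apply div_le_div_of_nonneg_right ?_ (by positivity)
  have := sq_avgOut_le S (fun z => f z - (f (update z i true) + f (update z i false)) / 2)
  calc ∑ x : Fin n → Bool,
        (avgOut n S f x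
          - (avgOut n S f (update x i true) + avgOut n S f (update x i false)) / 2) ^ 2
      = ∑ x : Fin n → Bool,
          (avgOut n S (fun z => f z - (f (update z i true) + f (update z i false)) / 2) x) ^ 2 := by
        exact Finset.sum_congr rfl fun x _ => by rw [avgOut_d S i hi f x]
    _ ≤ ∑ x : Fin n → Bool,
          (f x - (f (update x i true) + f (update x i false)) / 2) ^ 2 := this

noncomputable def bil (n : ℕ) (μ : Bool × Bool → ℝ) (f g : (Fin n → Bool) → ℝ) : ℝ :=
  ∑ x : Fin n → Bool, ∑ y : Fin n → Bool, (∏ i, μ (x i, y i)) * (f x * g y)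

lemma sum_prod_margx (μ : Bool × Bool → ℝ) (hmargx : ∀ b, μ (b, true) + μ (b, false) = 1/2)
    (x : Fin n → Bool) :
    ∑ y : Fin n → Bool, ∏ j, μ (x j, y j) = (1/2 : ℝ) ^ n := by
  have h := Finset.prod_univ_sum (fun _ : Fin n => (Finset.univ : Finset Bool))
    (fun j b => μ (x j, b))
  rw [Fintype.piFinset_univ] at h
  rw [← h]
  rw [show (∏ j : Fin n, ∑ b : Bool, μ (x j, b)) = ∏ j : Fin n, (1/2 : ℝ) from
    Finset.prod_congr rfl fun j _ => by rw [Fintype.sum_bool, hmargx]]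
  simp

lemma sum_prod_margy (μ : Bool × Bool → ℝ) (hmargy : ∀ b, μ (true, b) + μ (false, b) = 1/2)
    (y : Fin n → Bool) :
    ∑ x : Fin n → Bool, ∏ j, μ (x j, y j) = (1/2 : ℝ) ^ n := by
  have h := Finset.prod_univ_sum (fun _ : Fin n => (Finset.univ : Finset Bool))
    (fun j b => μ (b, y j))
  rw [Fintype.piFinset_univ] at h
  rw [show (∑ x : Fin n → Bool, ∏ j, μ (x j, y j))
      = ∑ x : Fin n → Bool, ∏ j, μ (x j, y j) from rfl, ← h]
  rw [show (∏ j : Fin n, ∑ b : Bool, μ (b, y j)) = ∏ j : Fin n, (1/2 : ℝ) from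
    Finset.prod_congr rfl fun j _ => by rw [Fintype.sum_bool, hmargy]]
  simp

lemma claimB (μ : Bool × Bool → ℝ) (hnn : ∀ p, 0 ≤ μ p)
    (hmargx : ∀ b, μ (b, true) + μ (b, false) = 1/2)
    (d h : (Fin n → Bool) → ℝ) (hh : ∀ y, h y ∈ Set.Icc (0:ℝ) 1) :
    |bil n μ d h| ≤ (∑ x : Fin n → Bool, |d x|) * (1/2) ^ n := by
  have hW : ∀ x : Fin n → Bool,
      0 ≤ (∑ y : Fin n → Bool, (∏ j, μ (x j, y j)) * h y) ∧
      (∑ y : Fin n → Bool, (∏ j, μ (x j, y j)) * h y) ≤ (1/2:ℝ) ^ n := by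
    intro x
    constructor
    · exact Finset.sum_nonneg fun y _ =>
        mul_nonneg (Finset.prod_nonneg fun j _ => hnn _) (hh y).1
    · calc (∑ y : Fin n → Bool, (∏ j, μ (x j, y j)) * h y)
          ≤ ∑ y : Fin n → Bool, (∏ j, μ (x j, y j)) := Finset.sum_le_sum fun y _ => by
            nlinarith [Finset.prod_nonneg (fun j (_ : j ∈ Finset.univ) => hnn (x j, y j)),
              (hh y).1, (hh y).2]
        _ = (1/2:ℝ) ^ n := sum_prod_margx μ hmargx x
  have hb : bil n μ d h = ∑ x : Fin n → Bool,
      d x * (∑ y : Fin n → Bool, (∏ j, μ (x j, y j)) * h y) := by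
    unfold bil
    refine Finset.sum_congr rfl fun x _ => ?_
    rw [Finset.mul_sum]
    exact Finset.sum_congr rfl fun y _ => by ring
  rw [hb]
  calc |∑ x : Fin n → Bool, d x * (∑ y : Fin n → Bool, (∏ j, μ (x j, y j)) * h y)|
      ≤ ∑ x : Fin n → Bool, |d x * (∑ y : Fin n → Bool, (∏ j, μ (x j, y j)) * h y)| :=
        Finset.abs_sum_le_sum_abs _ _
    _ ≤ ∑ x : Fin n → Bool, |d x| * (1/2:ℝ) ^ n := Finset.sum_le_sum fun x _ => by
        rw [abs_mul]
        apply mul_le_mul_of_nonneg_left _ (abs_nonneg _)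
        rw [abs_of_nonneg (hW x).1]
        exact (hW x).2
    _ = (∑ x : Fin n → Bool, |d x|) * (1/2) ^ n := by rw [← Finset.sum_mul]

lemma claimB' (μ : Bool × Bool → ℝ) (hnn : ∀ p, 0 ≤ μ p)
    (hmargy : ∀ b, μ (true, b) + μ (false, b) = 1/2)
    (h d : (Fin n → Bool) → ℝ) (hh : ∀ y, h y ∈ Set.Icc (0:ℝ) 1) :
    |bil n μ h d| ≤ (∑ y : Fin n → Bool, |d y|) * (1/2) ^ n := by
  have hW : ∀ y : Fin n → Bool,
      0 ≤ (∑ x : Fin n → Bool, (∏ j, μ (x j, y j)) * h x) ∧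
      (∑ x : Fin n → Bool, (∏ j, μ (x j, y j)) * h x) ≤ (1/2:ℝ) ^ n := by
    intro y
    constructor
    · exact Finset.sum_nonneg fun x _ =>
        mul_nonneg (Finset.prod_nonneg fun j _ => hnn _) (hh x).1
    · calc (∑ x : Fin n → Bool, (∏ j, μ (x j, y j)) * h x)
          ≤ ∑ x : Fin n → Bool, (∏ j, μ (x j, y j)) := Finset.sum_le_sum fun x _ => by
            nlinarith [Finset.prod_nonneg (fun j (_ : j ∈ Finset.univ) => hnn (x j, y j)),
              (hh x).1, (hh x).2]
        _ = (1/2:ℝ) ^ n := sum_prod_margy μ hmargy y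
  have hb : bil n μ h d = ∑ y : Fin n → Bool,
      d y * (∑ x : Fin n → Bool, (∏ j, μ (x j, y j)) * h x) := by
    unfold bil
    rw [Finset.sum_comm]
    refine Finset.sum_congr rfl fun y _ => ?_
    rw [Finset.mul_sum]
    exact Finset.sum_congr rfl fun x _ => by ring
  rw [hb]
  calc |∑ y : Fin n → Bool, d y * (∑ x : Fin n → Bool, (∏ j, μ (x j, y j)) * h x)|
      ≤ ∑ y : Fin n → Bool, |d y * (∑ x : Fin n → Bool, (∏ j, μ (x j, y j)) * h x)| :=
        Finset.abs_sum_le_sum_abs _ _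
    _ ≤ ∑ y : Fin n → Bool, |d y| * (1/2:ℝ) ^ n := Finset.sum_le_sum fun y _ => by
        rw [abs_mul]
        apply mul_le_mul_of_nonneg_left _ (abs_nonneg _)
        rw [abs_of_nonneg (hW y).1]
        exact (hW y).2
    _ = (∑ y : Fin n → Bool, |d y|) * (1/2) ^ n := by rw [← Finset.sum_mul]

lemma prod_update_left (μ : Bool × Bool → ℝ) (i : Fin n) (x y : Fin n → Bool) (b : Bool) :
    ∏ j, μ (update x i b j, y j)
      = μ (b, y i) * ∏ j ∈ Finset.univ.erase i, μ (x j, y j) := by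
  rw [← Finset.mul_prod_erase Finset.univ (fun j => μ (update x i b j, y j))
    (Finset.mem_univ i)]
  rw [update_self]
  congr 1
  refine Finset.prod_congr rfl fun j hj => ?_
  rw [update_of_ne (Finset.ne_of_mem_erase hj)]

lemma prod_update_right (μ : Bool × Bool → ℝ) (i : Fin n) (x y : Fin n → Bool) (b : Bool) :
    ∏ j, μ (x j, update y i b j)
      = μ (x i, b) * ∏ j ∈ Finset.univ.erase i, μ (x j, y j) := by
  rw [← Finset.mul_prod_erase Finset.univ (fun j => μ (x j, update y i b j))
    (Finset.mem_univ i)]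
  rw [update_self]
  congr 1
  refine Finset.prod_congr rfl fun j hj => ?_
  rw [update_of_ne (Finset.ne_of_mem_erase hj)]

lemma Q_update_right (μ : Bool × Bool → ℝ) (i : Fin n) (x y : Fin n → Bool) (b : Bool) :
    ∏ j ∈ Finset.univ.erase i, μ (x j, update y i b j)
      = ∏ j ∈ Finset.univ.erase i, μ (x j, y j) := by
  refine Finset.prod_congr rfl fun j hj => ?_
  rw [update_of_ne (Finset.ne_of_mem_erase hj)]

lemma Ai_update (i : Fin n) (h : (Fin n → Bool) → ℝ) (y : Fin n → Bool) (b : Bool) :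
    Ai i h (update y i b) = Ai i h y := by
  unfold Ai
  rw [update_idem, update_idem]

lemma claimA (μ : Bool × Bool → ℝ)
    (hmargx : ∀ b, μ (b, true) + μ (b, false) = 1/2)
    (hmargy : ∀ b, μ (true, b) + μ (false, b) = 1/2)
    (i : Fin n) (g h : (Fin n → Bool) → ℝ)
    (hg : ∀ x b, g (update x i b) = g x) :
    bil n μ g h = bil n μ g (Ai i h) := by
  have hL : bil n μ g h = ∑ x : Fin n → Bool, ∑ y : Fin n → Bool,
      (1/4 : ℝ) * ((∏ j ∈ Finset.univ.erase i, μ (x j, y j)) * (g x * h y)) := by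
    unfold bil
    rw [sum_split i (fun x => ∑ y : Fin n → Bool, (∏ j, μ (x j, y j)) * (g x * h y))]
    refine Finset.sum_congr rfl fun x _ => ?_
    have e : ∀ b, (∑ y : Fin n → Bool, (∏ j, μ (update x i b j, y j)) * (g (update x i b) * h y))
        = ∑ y : Fin n → Bool,
            (μ (b, y i) * ∏ j ∈ Finset.univ.erase i, μ (x j, y j)) * (g x * h y) := by
      intro b
      refine Finset.sum_congr rfl fun y _ => ?_
      rw [prod_update_left, hg]
    rw [e true, e false, ← Finset.sum_add_distrib, Finset.sum_div]
    refine Finset.sum_congr rfl fun y _ => ?_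
    have hm := hmargy (y i)
    linear_combination ((∏ j ∈ Finset.univ.erase i, μ (x j, y j)) * (g x * h y) / 2) * hm
  have hR : bil n μ g (Ai i h) = ∑ x : Fin n → Bool, ∑ y : Fin n → Bool,
      (1/4 : ℝ) * ((∏ j ∈ Finset.univ.erase i, μ (x j, y j)) * (g x * h y)) := by
    unfold bil
    refine Finset.sum_congr rfl fun x _ => ?_
    rw [sum_split i (fun y => (∏ j, μ (x j, y j)) * (g x * Ai i h y))]
    have e1 : ∑ y : Fin n → Bool,
        ((∏ j, μ (x j, update y i true j)) * (g x * Ai i h (update y i true))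
          + (∏ j, μ (x j, update y i false j)) * (g x * Ai i h (update y i false))) / 2
        = ∑ y : Fin n → Bool,
            (1/4 : ℝ) * ((∏ j ∈ Finset.univ.erase i, μ (x j, y j)) * (g x * Ai i h y)) := by
      refine Finset.sum_congr rfl fun y _ => ?_
      rw [prod_update_right, prod_update_right, Ai_update, Ai_update]
      have hm := hmargx (x i)
      linear_combination ((∏ j ∈ Finset.univ.erase i, μ (x j, y j)) * (g x * Ai i h y) / 2) * hm
    rw [e1]
    have e2 : ∑ y : Fin n → Bool,
        (1/4 : ℝ) * ((∏ j ∈ Finset.univ.erase i, μ (x j, y j)) * (g x * h y))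
        = ∑ y : Fin n → Bool, ((1/4 : ℝ) * ((∏ j ∈ Finset.univ.erase i, μ (x j, update y i true j)) * (g x * h (update y i true)))
            + (1/4 : ℝ) * ((∏ j ∈ Finset.univ.erase i, μ (x j, update y i false j)) * (g x * h (update y i false)))) / 2 := by
      exact sum_split i _
    rw [e2]
    refine Finset.sum_congr rfl fun y _ => ?_
    rw [Q_update_right, Q_update_right]
    unfold Ai
    ring
  rw [hL, hR]

lemma Q_update_left (μ : Bool × Bool → ℝ) (i : Fin n) (x y : Fin n → Bool) (b : Bool) :
    ∏ j ∈ Finset.univ.erase i, μ (update x i b j, y j)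
      = ∏ j ∈ Finset.univ.erase i, μ (x j, y j) := by
  refine Finset.prod_congr rfl fun j hj => ?_
  rw [update_of_ne (Finset.ne_of_mem_erase hj)]

lemma claimA' (μ : Bool × Bool → ℝ)
    (hmargx : ∀ b, μ (b, true) + μ (b, false) = 1/2)
    (hmargy : ∀ b, μ (true, b) + μ (false, b) = 1/2)
    (i : Fin n) (h g : (Fin n → Bool) → ℝ)
    (hg : ∀ y b, g (update y i b) = g y) :
    bil n μ h g = bil n μ (Ai i h) g := by
  have hL : bil n μ h g = ∑ x : Fin n → Bool, ∑ y : Fin n → Bool,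
      (1/4 : ℝ) * ((∏ j ∈ Finset.univ.erase i, μ (x j, y j)) * (h x * g y)) := by
    unfold bil
    refine Finset.sum_congr rfl fun x _ => ?_
    rw [sum_split i (fun y => (∏ j, μ (x j, y j)) * (h x * g y))]
    refine Finset.sum_congr rfl fun y _ => ?_
    rw [prod_update_right, prod_update_right, hg, hg]
    have hm := hmargx (x i)
    linear_combination ((∏ j ∈ Finset.univ.erase i, μ (x j, y j)) * (h x * g y) / 2) * hm
  have hR : bil n μ (Ai i h) g = ∑ x : Fin n → Bool, ∑ y : Fin n → Bool,
      (1/4 : ℝ) * ((∏ j ∈ Finset.univ.erase i, μ (x j, y j)) * (h x * g y)) := by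
    unfold bil
    rw [sum_split i (fun x => ∑ y : Fin n → Bool, (∏ j, μ (x j, y j)) * (Ai i h x * g y))]
    have e1 : ∀ x : Fin n → Bool,
        (∑ y : Fin n → Bool, (∏ j, μ (update x i true j, y j)) * (Ai i h (update x i true) * g y)
          + ∑ y : Fin n → Bool, (∏ j, μ (update x i false j, y j)) * (Ai i h (update x i false) * g y)) / 2
        = ∑ y : Fin n → Bool,
            (1/4 : ℝ) * ((∏ j ∈ Finset.univ.erase i, μ (x j, y j)) * (Ai i h x * g y)) := by
      intro x
      rw [← Finset.sum_add_distrib, Finset.sum_div]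
      refine Finset.sum_congr rfl fun y _ => ?_
      rw [prod_update_left, prod_update_left, Ai_update, Ai_update]
      have hm := hmargy (y i)
      linear_combination ((∏ j ∈ Finset.univ.erase i, μ (x j, y j)) * (Ai i h x * g y) / 2) * hm
    rw [Finset.sum_congr rfl fun x _ => e1 x]
    have e2 : ∑ x : Fin n → Bool, ∑ y : Fin n → Bool,
        (1/4 : ℝ) * ((∏ j ∈ Finset.univ.erase i, μ (x j, y j)) * (h x * g y))
        = ∑ x : Fin n → Bool,
            ((∑ y : Fin n → Bool, (1/4 : ℝ) * ((∏ j ∈ Finset.univ.erase i, μ (update x i true j, y j)) * (h (update x i true) * g y)))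
              + ∑ y : Fin n → Bool, (1/4 : ℝ) * ((∏ j ∈ Finset.univ.erase i, μ (update x i false j, y j)) * (h (update x i false) * g y))) / 2 :=
      sum_split i _
    rw [e2]
    refine Finset.sum_congr rfl fun x _ => ?_
    rw [← Finset.sum_add_distrib]
    rw [show (∑ y : Fin n → Bool,
        ((1/4 : ℝ) * ((∏ j ∈ Finset.univ.erase i, μ (update x i true j, y j)) * (h (update x i true) * g y))
          + (1/4 : ℝ) * ((∏ j ∈ Finset.univ.erase i, μ (update x i false j, y j)) * (h (update x i false) * g y)))) / 2
      = ∑ y : Fin n → Bool,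
        ((1/4 : ℝ) * ((∏ j ∈ Finset.univ.erase i, μ (update x i true j, y j)) * (h (update x i true) * g y))
          + (1/4 : ℝ) * ((∏ j ∈ Finset.univ.erase i, μ (update x i false j, y j)) * (h (update x i false) * g y))) / 2
      from Finset.sum_div _ _ _]
    refine Finset.sum_congr rfl fun y _ => ?_
    rw [Q_update_left, Q_update_left]
    unfold Ai
    ring
  rw [hL, hR]

lemma bil_sub_left (μ : Bool × Bool → ℝ) (f f' g : (Fin n → Bool) → ℝ) :
    bil n μ f g - bil n μ f' g = bil n μ (fun x => f x - f' x) g := by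
  unfold bil
  rw [← Finset.sum_sub_distrib]
  refine Finset.sum_congr rfl fun x _ => ?_
  rw [← Finset.sum_sub_distrib]
  refine Finset.sum_congr rfl fun y _ => ?_
  ring

lemma bil_sub_right (μ : Bool × Bool → ℝ) (f g g' : (Fin n → Bool) → ℝ) :
    bil n μ f g - bil n μ f g' = bil n μ f (fun y => g y - g' y) := by
  unfold bil
  rw [← Finset.sum_sub_distrib]
  refine Finset.sum_congr rfl fun x _ => ?_
  rw [← Finset.sum_sub_distrib]
  refine Finset.sum_congr rfl fun y _ => ?_
  ring

lemma l1_le_sqrt (d : (Fin n → Bool) → ℝ) :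
    (∑ x : Fin n → Bool, |d x|) * (1/2) ^ n
      ≤ Real.sqrt ((∑ x : Fin n → Bool, (d x) ^ 2) / 2 ^ n) := by
  have h0 : 0 ≤ (∑ x : Fin n → Bool, |d x|) * (1/2 : ℝ) ^ n := by positivity
  have h1 : (∑ x : Fin n → Bool, |d x|) ^ 2
      ≤ (2:ℝ) ^ n * ∑ x : Fin n → Bool, (d x) ^ 2 := by
    have h := sq_sum_le_card_mul_sum_sq (s := (Finset.univ : Finset (Fin n → Bool)))
      (f := fun x => |d x|)
    have hc : ((Finset.univ : Finset (Fin n → Bool)).card : ℝ) = 2 ^ n := by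
      rw [Finset.card_univ]
      simp [Fintype.card_fun]
    calc (∑ x : Fin n → Bool, |d x|) ^ 2
        ≤ ((Finset.univ : Finset (Fin n → Bool)).card : ℝ)
            * ∑ x : Fin n → Bool, |d x| ^ 2 := h
      _ = (2:ℝ) ^ n * ∑ x : Fin n → Bool, (d x) ^ 2 := by
          rw [hc]
          congr 1
          exact Finset.sum_congr rfl fun x _ => sq_abs _
  have h3 : ((2:ℝ))^n * ((1/2:ℝ)^n * (1/2:ℝ)^n) = (1/2:ℝ)^n := by
    rw [← mul_pow, ← mul_pow]
    norm_num
  have hsq : ((∑ x : Fin n → Bool, |d x|) * (1/2:ℝ) ^ n) ^ 2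
      ≤ (∑ x : Fin n → Bool, (d x) ^ 2) / 2 ^ n := by
    calc ((∑ x : Fin n → Bool, |d x|) * (1/2:ℝ) ^ n) ^ 2
        = (∑ x : Fin n → Bool, |d x|) ^ 2 * ((1/2:ℝ)^n * (1/2:ℝ)^n) := by ring
      _ ≤ ((2:ℝ)^n * ∑ x : Fin n → Bool, (d x) ^ 2) * ((1/2:ℝ)^n * (1/2:ℝ)^n) := by
          apply mul_le_mul_of_nonneg_right h1 (by positivity)
      _ = (∑ x : Fin n → Bool, (d x) ^ 2) * (1/2:ℝ)^n := by
          linear_combination (∑ x : Fin n → Bool, (d x) ^ 2) * h3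
      _ = (∑ x : Fin n → Bool, (d x) ^ 2) / 2 ^ n := by
          rw [one_div_pow, mul_one_div]
  calc (∑ x : Fin n → Bool, |d x|) * (1/2:ℝ) ^ n
      = Real.sqrt (((∑ x : Fin n → Bool, |d x|) * (1/2:ℝ) ^ n) ^ 2) :=
        (Real.sqrt_sq h0).symm
    _ ≤ Real.sqrt ((∑ x : Fin n → Bool, (d x) ^ 2) / 2 ^ n) := Real.sqrt_le_sqrt hsq

lemma one_step (μ : Bool × Bool → ℝ) (hnn : ∀ p, 0 ≤ μ p)
    (hmargx : ∀ b, μ (b, true) + μ (b, false) = 1/2)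
    (hmargy : ∀ b, μ (true, b) + μ (false, b) = 1/2)
    (f₁ f₂ : (Fin n → Bool) → ℝ)
    (hf₁ : ∀ x, f₁ x ∈ Set.Icc (0:ℝ) 1) (hf₂ : ∀ x, f₂ x ∈ Set.Icc (0:ℝ) 1)
    (i : Fin n) (ε : ℝ)
    (hi : influenceR n f₁ i ≤ ε ∨ influenceR n f₂ i ≤ ε) :
    |bil n μ f₁ f₂ - bil n μ (Ai i f₁) (Ai i f₂)| ≤ Real.sqrt ε := by
  rcases hi with h1 | h2
  · have hA := claimA μ hmargx hmargy i (Ai i f₁) f₂ (fun x b => Ai_update i f₁ x b)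
    have key : bil n μ f₁ f₂ - bil n μ (Ai i f₁) (Ai i f₂)
        = bil n μ (fun x => f₁ x - Ai i f₁ x) f₂ := by
      rw [← hA, bil_sub_left]
    rw [key]
    have hinf : influenceR n f₁ i
        = (∑ x : Fin n → Bool, (f₁ x - Ai i f₁ x) ^ 2) / 2 ^ n := rfl
    calc |bil n μ (fun x => f₁ x - Ai i f₁ x) f₂|
        ≤ (∑ x : Fin n → Bool, |f₁ x - Ai i f₁ x|) * (1/2) ^ n :=
          claimB μ hnn hmargx _ f₂ hf₂
      _ ≤ Real.sqrt ((∑ x : Fin n → Bool, (f₁ x - Ai i f₁ x) ^ 2) / 2 ^ n) :=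
          l1_le_sqrt _
      _ = Real.sqrt (influenceR n f₁ i) := by rw [hinf]
      _ ≤ Real.sqrt ε := Real.sqrt_le_sqrt h1
  · have hA := claimA' μ hmargx hmargy i f₁ (Ai i f₂) (fun y b => Ai_update i f₂ y b)
    have key : bil n μ f₁ f₂ - bil n μ (Ai i f₁) (Ai i f₂)
        = bil n μ f₁ (fun y => f₂ y - Ai i f₂ y) := by
      rw [← hA, bil_sub_right]
    rw [key]
    have hinf : influenceR n f₂ i
        = (∑ y : Fin n → Bool, (f₂ y - Ai i f₂ y) ^ 2) / 2 ^ n := rfl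
    calc |bil n μ f₁ (fun y => f₂ y - Ai i f₂ y)|
        ≤ (∑ y : Fin n → Bool, |f₂ y - Ai i f₂ y|) * (1/2) ^ n :=
          claimB' μ hnn hmargy f₁ _ hf₁
      _ ≤ Real.sqrt ((∑ y : Fin n → Bool, (f₂ y - Ai i f₂ y) ^ 2) / 2 ^ n) :=
          l1_le_sqrt _
      _ = Real.sqrt (influenceR n f₂ i) := by rw [hinf]
      _ ≤ Real.sqrt ε := Real.sqrt_le_sqrt h2

lemma main_bound (μ : Bool × Bool → ℝ) (hnn : ∀ p, 0 ≤ μ p)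
    (hmargx : ∀ b, μ (b, true) + μ (b, false) = 1/2)
    (hmargy : ∀ b, μ (true, b) + μ (false, b) = 1/2)
    (f₁ f₂ : (Fin n → Bool) → ℝ)
    (hf₁ : ∀ x, f₁ x ∈ Set.Icc (0:ℝ) 1) (hf₂ : ∀ x, f₂ x ∈ Set.Icc (0:ℝ) 1)
    (ε : ℝ) (S : Finset (Fin n))
    (hS : ∀ i ∈ S, influenceR n f₁ i ≤ ε ∨ influenceR n f₂ i ≤ ε) :
    |bil n μ f₁ f₂ - bil n μ (avgOut n S f₁) (avgOut n S f₂)|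
      ≤ S.card * Real.sqrt ε := by
  induction S using Finset.induction_on with
  | empty =>
    rw [avgOut_empty, avgOut_empty]
    simp
  | @insert i S hi ih =>
    have hSsub : ∀ j ∈ S, influenceR n f₁ j ≤ ε ∨ influenceR n f₂ j ≤ ε :=
      fun j hj => hS j (Finset.mem_insert_of_mem hj)
    have ih' := ih hSsub
    have hIi : influenceR n (avgOut n S f₁) i ≤ ε ∨ influenceR n (avgOut n S f₂) i ≤ ε := by
      rcases hS i (Finset.mem_insert_self i S) with h | h
      · exact Or.inl (le_trans (influence_avgOut_le S i hi f₁) h)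
      · exact Or.inr (le_trans (influence_avgOut_le S i hi f₂) h)
    have hstep := one_step μ hnn hmargx hmargy (avgOut n S f₁) (avgOut n S f₂)
      (avgOut_mem_Icc S f₁ hf₁) (avgOut_mem_Icc S f₂ hf₂) i ε hIi
    have heq : ∀ f : (Fin n → Bool) → ℝ,
        avgOut n (insert i S) f = Ai i (avgOut n S f) := by
      intro f
      funext x
      rw [avgOut_insert S i hi f x]
      rfl
    rw [heq f₁, heq f₂]
    have htri : |bil n μ f₁ f₂ - bil n μ (Ai i (avgOut n S f₁)) (Ai i (avgOut n S f₂))|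
        ≤ |bil n μ f₁ f₂ - bil n μ (avgOut n S f₁) (avgOut n S f₂)|
          + |bil n μ (avgOut n S f₁) (avgOut n S f₂)
              - bil n μ (Ai i (avgOut n S f₁)) (Ai i (avgOut n S f₂))| := by
      apply abs_sub_le
    rw [Finset.card_insert_of_notMem hi]
    push_cast
    calc |bil n μ f₁ f₂ - bil n μ (Ai i (avgOut n S f₁)) (Ai i (avgOut n S f₂))|
        ≤ |bil n μ f₁ f₂ - bil n μ (avgOut n S f₁) (avgOut n S f₂)|
          + |bil n μ (avgOut n S f₁) (avgOut n S f₂)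
              - bil n μ (Ai i (avgOut n S f₁)) (Ai i (avgOut n S f₂))| := htri
      _ ≤ S.card * Real.sqrt ε + Real.sqrt ε := add_le_add ih' hstep
      _ = (S.card + 1) * Real.sqrt ε := by ring

/-- Averaging lemma: let `μ` be a distribution on `{-1,1}²` with uniform marginals and
let `(X_i, Y_i)` be i.i.d. from `μ`.  If for each `i ∈ S` at most one of
`f₁, f₂ : {-1,1}ⁿ → [0,1]` has `I_i > ε`, then the averaged functions
`g_j = avgOut S f_j` do not depend on the coordinates in `S`, are `[0,1]`-valued, have
the same expectations as the `f_j`, and satisfy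
`|E[f₁(X) f₂(Y)] - E[g₁(X) g₂(Y)]| ≤ |S| √ε`. -/
theorem stmt_18 (n : ℕ) (μ : Bool × Bool → ℝ)
    (hnn : ∀ p, 0 ≤ μ p)
    (hmargx : ∀ b, μ (b, true) + μ (b, false) = 1/2)
    (hmargy : ∀ b, μ (true, b) + μ (false, b) = 1/2)
    (f₁ f₂ : (Fin n → Bool) → ℝ)
    (hf₁ : ∀ x, f₁ x ∈ Set.Icc (0:ℝ) 1) (hf₂ : ∀ x, f₂ x ∈ Set.Icc (0:ℝ) 1)
    (ε : ℝ) (S : Finset (Fin n))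
    (hS : ∀ i ∈ S, influenceR n f₁ i ≤ ε ∨ influenceR n f₂ i ≤ ε) :
    (∀ (f : (Fin n → Bool) → ℝ) (x x' : Fin n → Bool), (∀ i ∉ S, x i = x' i) →
        avgOut n S f x = avgOut n S f x') ∧
    (∀ x, avgOut n S f₁ x ∈ Set.Icc (0:ℝ) 1 ∧ avgOut n S f₂ x ∈ Set.Icc (0:ℝ) 1) ∧
    ((∑ x : Fin n → Bool, avgOut n S f₁ x) / 2^n = (∑ x : Fin n → Bool, f₁ x) / 2^n) ∧
    ((∑ x : Fin n → Bool, avgOut n S f₂ x) / 2^n = (∑ x : Fin n → Bool, f₂ x) / 2^n) ∧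
    |(∑ x : Fin n → Bool, ∑ y : Fin n → Bool,
        (∏ i, μ (x i, y i)) * (f₁ x * f₂ y)) -
     (∑ x : Fin n → Bool, ∑ y : Fin n → Bool,
        (∏ i, μ (x i, y i)) * (avgOut n S f₁ x * avgOut n S f₂ y))|
      ≤ S.card * Real.sqrt ε := by
  refine ⟨fun f x x' h => avgOut_congr S f x x' h,
    fun x => ⟨avgOut_mem_Icc S f₁ hf₁ x, avgOut_mem_Icc S f₂ hf₂ x⟩,
    by rw [avgOut_sum], by rw [avgOut_sum], ?_⟩
  exact main_bound μ hnn hmargx hmargy f₁ f₂ hf₁ hf₂ ε S hS
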